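/- Let ℓ ≥ 1 and v ≥ 2 be integers, and let F be the free group on generators x₁, x₂, …, x_{ℓ+2}. Let H be the subgroup generated by the elements x₁^i x₂ x₁^{-(i+1)} for 0 ≤ i ≤ v−2 together with x₃, x₄, …, x_{ℓ+2}, and let K be the subgroup generated by x₁ and x₂. Then r̄(H ∩ K) · r̄(H ∨ K) · (v + ℓ − 2) = (v − 2) · (ℓ + 1) · r̄(H) · r̄(K); i.e., the ratio (r̄(H ∩ K) · r̄(H ∨ K)) / (r̄(H) · r̄(K)) equals (v−2)(ℓ+1)/(v+ℓ−2). -/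

import Mathlib

/-- The rank of a group: the minimal cardinality of a (finite) generating set. -/
noncomputable def grank (G : Type*) [Group G] : ℕ :=
  sInf {n : ℕ | ∃ S : Finset G, S.card = n ∧ Subgroup.closure (S : Set G) = ⊤}

/-- The reduced rank of a group: `max (0, rank - 1)` (truncated subtraction). -/
noncomputable def rbar (G : Type*) [Group G] : ℕ := grank G - 1

open FreeGroup Subgroup Function

lemma grank_le_card {G : Type*} [Group G] (S : Finset G)
    (h : Subgroup.closure (S : Set G) = ⊤) : grank G ≤ S.card :=
  Nat.sInf_le ⟨S, rfl, h⟩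

lemma mem_grankSet_of_equiv {G G' : Type*} [Group G] [Group G'] (e : G ≃* G') {n : ℕ}
    (h : n ∈ {n : ℕ | ∃ S : Finset G, S.card = n ∧ Subgroup.closure (S : Set G) = ⊤}) :
    n ∈ {n : ℕ | ∃ S : Finset G', S.card = n ∧ Subgroup.closure (S : Set G') = ⊤} := by
  classical
  obtain ⟨S, hc, hS⟩ := h
  refine ⟨S.image e, by rw [Finset.card_image_of_injective _ e.injective, hc], ?_⟩
  rw [Finset.coe_image]
  have h2 : (e : G → G') '' S = e.toMonoidHom '' S := rfl
  rw [h2, ← MonoidHom.map_closure, hS, ← MonoidHom.range_eq_map]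
  exact MonoidHom.range_eq_top.2 e.surjective

lemma grank_congr {G G' : Type*} [Group G] [Group G'] (e : G ≃* G') : grank G = grank G' :=
  congrArg sInf (Set.ext fun _ =>
    ⟨fun h => mem_grankSet_of_equiv e h, fun h => mem_grankSet_of_equiv e.symm h⟩)

lemma card_le_of_closure_eq_top (X : Type*) [Fintype X] (S : Finset (FreeGroup X))
    (h : Subgroup.closure (S : Set (FreeGroup X)) = ⊤) : Fintype.card X ≤ S.card := by
  classical
  set f : FreeGroup X →* Multiplicative (X → ℤ) :=
    FreeGroup.lift (fun x => Multiplicative.ofAdd (Pi.single x 1)) with hf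
  set s' : Set (X → ℤ) := (fun g => (f g).toAdd) '' ↑S with hs'
  have hspan : ∀ g : FreeGroup X, (f g).toAdd ∈ Submodule.span ℤ s' := by
    intro g
    have hg : g ∈ Subgroup.closure (S : Set (FreeGroup X)) := h ▸ Subgroup.mem_top g
    refine Subgroup.closure_induction ?_ ?_ ?_ ?_ hg
    · intro x hx; exact Submodule.subset_span ⟨x, hx, rfl⟩
    · simpa using Submodule.zero_mem _
    · intro x y _ _ hx hy; rw [_root_.map_mul, toAdd_mul]; exact Submodule.add_mem _ hx hy
    · intro x _ hx; rw [_root_.map_inv, toAdd_inv]; exact Submodule.neg_mem _ hx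
  have hsurj : ∀ v : X → ℤ, ∃ g, (f g).toAdd = v := by
    intro v
    refine ⟨(Finset.univ.toList.map fun x => FreeGroup.of x ^ v x).prod, ?_⟩
    have h1 : ∀ x : X, f ((FreeGroup.of x) ^ (v x)) = Multiplicative.ofAdd (Pi.single x (v x)) := by
      intro x
      rw [_root_.map_zpow, hf, FreeGroup.lift_apply_of, ← ofAdd_zsmul, ← Pi.single_smul, smul_eq_mul, mul_one]
    rw [_root_.map_list_prod, List.map_map]
    have h2 : (⇑f ∘ fun x => FreeGroup.of x ^ v x) = fun x => Multiplicative.ofAdd (Pi.single x (v x)) :=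
      funext h1
    rw [h2, Finset.prod_map_toList, toAdd_prod]
    simp only [toAdd_ofAdd]
    exact Finset.univ_sum_single v
  have hspan_top : Submodule.span ℤ s' = ⊤ := by
    rw [Submodule.eq_top_iff']
    intro v
    obtain ⟨g, rfl⟩ := hsurj v
    exact hspan g
  have hrange : Set.range (fun g : ↥S => (f g).toAdd) = s' := by
    rw [hs']
    ext w
    simp [Set.range, Set.image]
  have hle : Module.finrank ℤ (X → ℤ) ≤ Fintype.card ↥S :=
    finrank_le_of_span_eq_top (v := fun g : ↥S => (f g).toAdd) (by rw [hrange, hspan_top])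
  calc Fintype.card X = Module.finrank ℤ (X → ℤ) := (Module.finrank_pi ℤ).symm
    _ ≤ Fintype.card ↥S := hle
    _ = S.card := Fintype.card_coe S

lemma grank_freeGroup (X : Type*) [Fintype X] : grank (FreeGroup X) = Fintype.card X := by
  classical
  have htop : Subgroup.closure ((Finset.univ.image (FreeGroup.of : X → FreeGroup X) : Finset _) :
      Set (FreeGroup X)) = ⊤ := by
    rw [Finset.coe_image, Finset.coe_univ, Set.image_univ, FreeGroup.closure_range_of]
  apply le_antisymm
  · have h := grank_le_card _ htop
    rwa [Finset.card_image_of_injective _ FreeGroup.of_injective, Finset.card_univ] at h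
  · refine le_csInf ⟨_, _, rfl, htop⟩ ?_
    rintro n ⟨S, rfl, hS⟩
    exact card_le_of_closure_eq_top X S hS



section Coord
variable {B : Type*}

open scoped Classical in
noncomputable def retr (T : Set B) : FreeGroup B →* FreeGroup B :=
  FreeGroup.lift fun b => if b ∈ T then FreeGroup.of b else 1

lemma retr_of_mem {T : Set B} {b : B} (h : b ∈ T) : retr T (FreeGroup.of b) = FreeGroup.of b := by
  simp [retr, FreeGroup.lift_apply_of, h]

lemma retr_of_not_mem {T : Set B} {b : B} (h : b ∉ T) : retr T (FreeGroup.of b) = 1 := by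
  simp [retr, FreeGroup.lift_apply_of, h]

lemma mem_closure_iff_retr (T : Set B) (x : FreeGroup B) :
    x ∈ Subgroup.closure (FreeGroup.of '' T) ↔ retr T x = x := by
  constructor
  · intro hx
    refine Subgroup.closure_induction ?_ ?_ ?_ ?_ hx
    · rintro g ⟨b, hb, rfl⟩; exact retr_of_mem hb
    · exact _root_.map_one _
    · intro a b _ _ ha hb; rw [_root_.map_mul, ha, hb]
    · intro a _ ha; rw [_root_.map_inv, ha]
  · intro hx
    rw [← hx]
    have hle : (retr T).range ≤ Subgroup.closure (FreeGroup.of '' T) := by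
      classical
      rw [retr, FreeGroup.range_lift_eq_closure]
      refine (Subgroup.closure_le _).2 ?_
      rintro g ⟨b, rfl⟩
      by_cases hb : b ∈ T
      · simp only [if_pos hb]; exact Subgroup.subset_closure ⟨b, hb, rfl⟩
      · simp only [if_neg hb]; exact Subgroup.one_mem _
    exact hle ⟨x, rfl⟩

lemma retr_comp_retr (T U : Set B) : (retr T).comp (retr U) = retr (T ∩ U : Set B) := by
  classical
  apply FreeGroup.ext_hom
  intro b
  by_cases hU : b ∈ U
  · by_cases hT : b ∈ T
    · simp [MonoidHom.comp_apply, retr_of_mem hU, retr_of_mem hT, retr_of_mem (Set.mem_inter hT hU)]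
    · have : b ∉ (T ∩ U : Set B) := fun h => hT h.1
      simp [MonoidHom.comp_apply, retr_of_mem hU, retr_of_not_mem hT, retr_of_not_mem this]
  · have : b ∉ (T ∩ U : Set B) := fun h => hU h.2
    simp [MonoidHom.comp_apply, retr_of_not_mem hU, retr_of_not_mem this]

lemma closure_inf_closure (T U : Set B) :
    Subgroup.closure (FreeGroup.of '' T) ⊓ Subgroup.closure (FreeGroup.of '' U)
      = Subgroup.closure (FreeGroup.of '' (T ∩ U)) := by
  apply le_antisymm
  · intro x hx
    rw [Subgroup.mem_inf, mem_closure_iff_retr, mem_closure_iff_retr] at hx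
    rw [mem_closure_iff_retr, ← retr_comp_retr, MonoidHom.comp_apply, hx.2, hx.1]
  · refine le_inf (Subgroup.closure_mono ?_) (Subgroup.closure_mono ?_) <;>
      exact Set.image_mono (by intro b hb; first | exact hb.1 | exact hb.2)

end Coord

lemma grank_closure_range {X B : Type*} [Fintype X] [Nonempty X] {ι : X → B}
    (hι : Function.Injective ι) :
    grank ↥(Subgroup.closure (Set.range fun x => (FreeGroup.of (ι x) : FreeGroup B)))
      = Fintype.card X := by
  set j : FreeGroup X →* FreeGroup B := FreeGroup.lift fun x => FreeGroup.of (ι x) with hj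
  have hrange : j.range = Subgroup.closure (Set.range fun x => (FreeGroup.of (ι x) : FreeGroup B)) :=
    FreeGroup.range_lift_eq_closure
  have hinj : Function.Injective j := by
    set r : FreeGroup B →* FreeGroup X :=
      FreeGroup.lift fun b => (FreeGroup.of (Function.invFun ι b) : FreeGroup X) with hr
    have hcomp : r.comp j = MonoidHom.id _ := by
      apply FreeGroup.ext_hom
      intro x
      simp [hj, hr, FreeGroup.lift_apply_of, Function.leftInverse_invFun hι x]
    intro a b h
    have := congrArg r h
    rwa [← MonoidHom.comp_apply, ← MonoidHom.comp_apply, hcomp, MonoidHom.id_apply,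
      MonoidHom.id_apply] at this
  have e : FreeGroup X ≃* ↥(Subgroup.closure (Set.range fun x => (FreeGroup.of (ι x) : FreeGroup B))) :=
    (MonoidHom.ofInjective hinj).trans (MulEquiv.subgroupCongr hrange)
  rw [← grank_congr e, grank_freeGroup]

section Embed
variable (L : ℕ)

/-- The shift automorphism on the free group on `ℤ × Fin (L+1)`. -/
noncomputable def sigmaAut : MulAut (FreeGroup (ℤ × Fin (L + 1))) :=
  FreeGroup.freeGroupCongr ((Equiv.addRight (1 : ℤ)).prodCongr (Equiv.refl (Fin (L + 1))))

lemma sigmaAut_of (m : ℤ) (k : Fin (L + 1)) :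
    sigmaAut L (FreeGroup.of (m, k)) = FreeGroup.of (m + 1, k) := by
  simp [sigmaAut]

lemma sigmaAut_pow_of (n m : ℤ) (k : Fin (L + 1)) :
    (sigmaAut L ^ n) (FreeGroup.of (m, k)) = FreeGroup.of (m + n, k) := by
  induction n using Int.induction_on with
  | zero => simp [MulAut.one_apply]
  | succ i ih =>
      have : sigmaAut L ^ ((i : ℤ) + 1) = sigmaAut L * sigmaAut L ^ (i : ℤ) := by
        rw [← zpow_one_add]; ring_nf
      rw [this, MulAut.mul_apply, ih, sigmaAut_of]
      congr 2
      ring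
  | pred i ih =>
      have : sigmaAut L ^ (-(i : ℤ) - 1) = (sigmaAut L)⁻¹ * sigmaAut L ^ (-(i : ℤ)) := by
        rw [← zpow_neg_one, ← zpow_add]; ring_nf
      rw [this, MulAut.mul_apply, ih]
      apply (sigmaAut L).injective
      rw [MulAut.inv_def]
      rw [MulEquiv.apply_symm_apply, sigmaAut_of]
      congr 2
      ring

/-- The action of `ℤ` on the free group on `ℤ × Fin (L+1)` by shifting. -/
noncomputable def alphaAct : Multiplicative ℤ →* MulAut (FreeGroup (ℤ × Fin (L + 1))) :=
  zpowersHom _ (sigmaAut L)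

/-- The embedding of the free group on `ℤ × Fin (L+1)` into the free group on `Fin (L+2)`,
`(n, 0) ↦ x₁ⁿ x₂ x₁^{-(n+1)}` and `(n, k) ↦ x₁ⁿ x_{k+2} x₁^{-n}` for `k ≥ 1`. -/
noncomputable def phiEmb : FreeGroup (ℤ × Fin (L + 1)) →* FreeGroup (Fin (L + 2)) :=
  FreeGroup.lift fun b =>
    if b.2 = (0 : Fin (L + 1)) then
      FreeGroup.of (⟨0, by omega⟩ : Fin (L + 2)) ^ b.1 * FreeGroup.of (⟨1, by omega⟩ : Fin (L + 2)) *
        FreeGroup.of (⟨0, by omega⟩ : Fin (L + 2)) ^ (-(b.1 + 1))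
    else
      FreeGroup.of (⟨0, by omega⟩ : Fin (L + 2)) ^ b.1 *
        FreeGroup.of (⟨(b.2 : ℕ) + 1, by omega⟩ : Fin (L + 2)) *
        FreeGroup.of (⟨0, by omega⟩ : Fin (L + 2)) ^ (-b.1)

/-- The comparison map realizing `FreeGroup (Fin (L+2))` as a semidirect product. -/
noncomputable def psiCmp :
    FreeGroup (Fin (L + 2)) →* FreeGroup (ℤ × Fin (L + 1)) ⋊[alphaAct L] Multiplicative ℤ :=
  FreeGroup.lift fun j =>
    if (j : ℕ) = 0 then SemidirectProduct.inr (Multiplicative.ofAdd 1)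
    else if (j : ℕ) = 1 then
      SemidirectProduct.inl (FreeGroup.of ((0 : ℤ), (0 : Fin (L + 1)))) *
        SemidirectProduct.inr (Multiplicative.ofAdd 1)
    else
      SemidirectProduct.inl (FreeGroup.of ((0 : ℤ), (⟨(j : ℕ) - 1, by omega⟩ : Fin (L + 1))))

lemma psiCmp_x1_zpow (n : ℤ) :
    psiCmp L (FreeGroup.of (⟨0, by omega⟩ : Fin (L + 2)) ^ n)
      = SemidirectProduct.inr (Multiplicative.ofAdd n) := by
  rw [_root_.map_zpow, psiCmp, FreeGroup.lift_apply_of]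
  norm_num
  rw [← _root_.map_zpow, ← ofAdd_zsmul, smul_eq_mul, mul_one]

lemma psiCmp_phiEmb (w : FreeGroup (ℤ × Fin (L + 1))) :
    psiCmp L (phiEmb L w) = SemidirectProduct.inl w := by
  have key : (psiCmp L).comp (phiEmb L) = SemidirectProduct.inl := by
    apply FreeGroup.ext_hom
    rintro ⟨n, k⟩
    rw [MonoidHom.comp_apply, phiEmb, FreeGroup.lift_apply_of]
    by_cases hk : k = (0 : Fin (L + 1))
    · rw [if_pos hk, _root_.map_mul, _root_.map_mul, psiCmp_x1_zpow, psiCmp_x1_zpow]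
      have hx2 : psiCmp L (FreeGroup.of (⟨1, by omega⟩ : Fin (L + 2)))
          = SemidirectProduct.inl (FreeGroup.of ((0 : ℤ), (0 : Fin (L + 1)))) *
              SemidirectProduct.inr (Multiplicative.ofAdd 1) := by
        rw [psiCmp, FreeGroup.lift_apply_of]; norm_num
      rw [hx2]
      have hcollapse : (SemidirectProduct.inr (Multiplicative.ofAdd n) *
          (SemidirectProduct.inl (FreeGroup.of ((0 : ℤ), (0 : Fin (L + 1)))) *
            SemidirectProduct.inr (Multiplicative.ofAdd 1)) *
          SemidirectProduct.inr (Multiplicative.ofAdd (-(n + 1)))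
          : FreeGroup (ℤ × Fin (L + 1)) ⋊[alphaAct L] Multiplicative ℤ)
          = SemidirectProduct.inr (Multiplicative.ofAdd n) *
              SemidirectProduct.inl (FreeGroup.of ((0 : ℤ), (0 : Fin (L + 1)))) *
              SemidirectProduct.inr (Multiplicative.ofAdd n)⁻¹ := by
        have h1 : (Multiplicative.ofAdd n)⁻¹ = Multiplicative.ofAdd 1 * Multiplicative.ofAdd (-(n+1)) := by
          rw [← ofAdd_neg, ← ofAdd_add]; ring_nf
        rw [h1, _root_.map_mul]
        group
      rw [hcollapse, ← SemidirectProduct.inl_aut]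
      rw [hk]
      congr 1
      show (alphaAct L (Multiplicative.ofAdd n)) _ = _
      rw [alphaAct, zpowersHom_apply, toAdd_ofAdd, sigmaAut_pow_of, zero_add]
    · rw [if_neg hk, _root_.map_mul, _root_.map_mul, psiCmp_x1_zpow, psiCmp_x1_zpow]
      have hk' : 1 ≤ (k : ℕ) := Nat.one_le_iff_ne_zero.2 fun h => hk (by ext; simp [h])
      have hxj : psiCmp L (FreeGroup.of (⟨(k : ℕ) + 1, by omega⟩ : Fin (L + 2)))
          = SemidirectProduct.inl (FreeGroup.of ((0 : ℤ), k)) := by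
        rw [psiCmp, FreeGroup.lift_apply_of]
        have h0 : ¬ (((⟨(k : ℕ) + 1, by omega⟩ : Fin (L + 2)) : ℕ) = 0) := by simp
        have h1 : ¬ (((⟨(k : ℕ) + 1, by omega⟩ : Fin (L + 2)) : ℕ) = 1) := by
          intro hcon
          simp only [] at hcon
          omega
        rw [if_neg h0, if_neg h1]
        simp [Fin.ext_iff]
      rw [hxj]
      have hcollapse : (SemidirectProduct.inr (Multiplicative.ofAdd n) *
          SemidirectProduct.inl (FreeGroup.of ((0 : ℤ), k)) *
          SemidirectProduct.inr (Multiplicative.ofAdd (-n))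
          : FreeGroup (ℤ × Fin (L + 1)) ⋊[alphaAct L] Multiplicative ℤ)
          = SemidirectProduct.inr (Multiplicative.ofAdd n) *
              SemidirectProduct.inl (FreeGroup.of ((0 : ℤ), k)) *
              SemidirectProduct.inr (Multiplicative.ofAdd n)⁻¹ := by
        rw [← ofAdd_neg]
      rw [hcollapse, ← SemidirectProduct.inl_aut]
      congr 1
      show (alphaAct L (Multiplicative.ofAdd n)) _ = _
      rw [alphaAct, zpowersHom_apply, toAdd_ofAdd, sigmaAut_pow_of, zero_add]
  exact DFunLike.congr_fun key w

lemma phiEmb_injective : Function.Injective (phiEmb L) := by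
  intro a b h
  have := congrArg (psiCmp L) h
  rwa [psiCmp_phiEmb, psiCmp_phiEmb, SemidirectProduct.inl_injective.eq_iff] at this

end Embed

def iotaH (L V : ℕ) : Fin (V - 1) ⊕ Fin L → ℤ × Fin (L + 1)
  | .inl i => (((i : ℕ) : ℤ), 0)
  | .inr t => (0, ⟨(t : ℕ) + 1, by omega⟩)

def iotaI (L V : ℕ) (i : Fin (V - 1)) : ℤ × Fin (L + 1) := (((i : ℕ) : ℤ), 0)

lemma iotaH_injective (L V : ℕ) : Function.Injective (iotaH L V) := by
  rintro (i | t) (i' | t') h <;>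
    simp only [iotaH, Prod.mk.injEq, Fin.ext_iff, Nat.cast_inj, Fin.val_zero] at h
  · exact congrArg Sum.inl (Fin.ext h.1)
  · exfalso; have := h.2; omega
  · exfalso; have := h.2; omega
  · exact congrArg Sum.inr (Fin.ext (by have := h.2; omega))

lemma iotaI_injective (L V : ℕ) : Function.Injective (iotaI L V) := by
  intro i i' h
  simp only [iotaI, Prod.mk.injEq, Nat.cast_inj] at h
  exact Fin.ext h.1

lemma phiEmb_of_zero (L : ℕ) (n : ℤ) :
    phiEmb L (FreeGroup.of (n, (0 : Fin (L + 1)))) =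
      FreeGroup.of (⟨0, by omega⟩ : Fin (L + 2)) ^ n *
        FreeGroup.of (⟨1, by omega⟩ : Fin (L + 2)) *
        FreeGroup.of (⟨0, by omega⟩ : Fin (L + 2)) ^ (-(n + 1)) := by
  rw [phiEmb, FreeGroup.lift_apply_of, if_pos rfl]

lemma phiEmb_of_pos (L : ℕ) (n : ℤ) (k : Fin (L + 1)) (hk : k ≠ 0) :
    phiEmb L (FreeGroup.of (n, k)) =
      FreeGroup.of (⟨0, by omega⟩ : Fin (L + 2)) ^ n *
        FreeGroup.of (⟨(k : ℕ) + 1, by omega⟩ : Fin (L + 2)) *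
        FreeGroup.of (⟨0, by omega⟩ : Fin (L + 2)) ^ (-n) := by
  rw [phiEmb, FreeGroup.lift_apply_of, if_neg hk]

/-- With `H = ⟨x₁ⁱx₂x₁^{-(i+1)} (0 ≤ i ≤ v-2), x₃, …, x_{ℓ+2}⟩` and `K = ⟨x₁, x₂⟩`
in the free group on `x₁, …, x_{ℓ+2}`, the ratio
`(r̄(H ∩ K)·r̄(H ∨ K)) / (r̄(H)·r̄(K))` equals `(v-2)(ℓ+1)/(v+ℓ-2)`, stated
multiplicatively in ℕ. -/
theorem rbar_ratio (ℓ v : ℕ) (hℓ : 1 ≤ ℓ) (hv : 2 ≤ v)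
    (x₁ x₂ : FreeGroup (Fin (ℓ + 2)))
    (hx₁ : x₁ = FreeGroup.of ⟨0, by omega⟩)
    (hx₂ : x₂ = FreeGroup.of ⟨1, by omega⟩)
    (H K : Subgroup (FreeGroup (Fin (ℓ + 2))))
    (hH : H = Subgroup.closure
      ({g | ∃ i : ℕ, i ≤ v - 2 ∧ g = x₁ ^ (i : ℤ) * x₂ * x₁ ^ (-((i : ℤ) + 1))} ∪
       {g | ∃ j : Fin (ℓ + 2), 2 ≤ (j : ℕ) ∧ g = FreeGroup.of j}))
    (hK : K = Subgroup.closure {x₁, x₂}) :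
    rbar ↥(H ⊓ K) * rbar ↥(H ⊔ K) * (v + ℓ - 2)
      = (v - 2) * (ℓ + 1) * (rbar ↥H * rbar ↥K) := by
  classical
  subst hx₁ hx₂
  set x₁ : FreeGroup (Fin (ℓ + 2)) := FreeGroup.of ⟨0, by omega⟩ with hx₁
  set x₂ : FreeGroup (Fin (ℓ + 2)) := FreeGroup.of ⟨1, by omega⟩ with hx₂
  haveI : Nonempty (Fin (v - 1) ⊕ Fin ℓ) := ⟨Sum.inl ⟨0, by omega⟩⟩
  haveI : Nonempty (Fin (v - 1)) := ⟨⟨0, by omega⟩⟩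
  set MH : Subgroup (FreeGroup (ℤ × Fin (ℓ + 1))) :=
    Subgroup.closure (Set.range fun x => FreeGroup.of (iotaH ℓ v x)) with hMH
  set MI : Subgroup (FreeGroup (ℤ × Fin (ℓ + 1))) :=
    Subgroup.closure (Set.range fun i => FreeGroup.of (iotaI ℓ v i)) with hMI
  set T0 : Set (ℤ × Fin (ℓ + 1)) := {b | b.2 = 0} with hT0
  set Tle : Set (Fin (ℓ + 2)) := {j | (j : ℕ) ≤ 1} with hTle
  -- H as an image
  have himg : (phiEmb ℓ) '' (Set.range fun x => FreeGroup.of (iotaH ℓ v x)) =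
      ({g | ∃ i : ℕ, i ≤ v - 2 ∧ g = x₁ ^ (i : ℤ) * x₂ * x₁ ^ (-((i : ℤ) + 1))} ∪
       {g | ∃ j : Fin (ℓ + 2), 2 ≤ (j : ℕ) ∧ g = FreeGroup.of j}) := by
    ext g
    constructor
    · rintro ⟨-, ⟨(i | t), rfl⟩, rfl⟩
      · left
        refine ⟨(i : ℕ), by omega, ?_⟩
        show phiEmb ℓ (FreeGroup.of (iotaH ℓ v (Sum.inl i))) = _
        rw [show iotaH ℓ v (Sum.inl i) = (((i : ℕ) : ℤ), (0 : Fin (ℓ + 1))) from rfl,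
          phiEmb_of_zero]
      · right
        refine ⟨⟨(t : ℕ) + 2, by omega⟩, by simp, ?_⟩
        show phiEmb ℓ (FreeGroup.of (iotaH ℓ v (Sum.inr t))) = _
        rw [show iotaH ℓ v (Sum.inr t) = ((0 : ℤ), (⟨(t : ℕ) + 1, by omega⟩ : Fin (ℓ + 1))) from
            rfl, phiEmb_of_pos ℓ 0 _ (by simp [Fin.ext_iff])]
        simp only [zpow_zero, one_mul, neg_zero, mul_one]
    · rintro (⟨i, hi, rfl⟩ | ⟨j, hj, rfl⟩)
      · refine ⟨FreeGroup.of (iotaH ℓ v (Sum.inl ⟨i, by omega⟩)), ⟨Sum.inl ⟨i, by omega⟩, rfl⟩, ?_⟩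
        rw [show iotaH ℓ v (Sum.inl ⟨i, by omega⟩) = ((i : ℤ), (0 : Fin (ℓ + 1))) from rfl,
          phiEmb_of_zero]
      · refine ⟨FreeGroup.of (iotaH ℓ v (Sum.inr ⟨(j : ℕ) - 2, by omega⟩)),
          ⟨Sum.inr ⟨(j : ℕ) - 2, by omega⟩, rfl⟩, ?_⟩
        rw [show iotaH ℓ v (Sum.inr ⟨(j : ℕ) - 2, by omega⟩)
            = ((0 : ℤ), (⟨(j : ℕ) - 2 + 1, by omega⟩ : Fin (ℓ + 1))) from rfl,
          phiEmb_of_pos ℓ 0 _ (by simp [Fin.ext_iff])]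
        simp only [zpow_zero, one_mul, neg_zero, mul_one]
        congr 1
        exact Fin.ext (by simp; omega)
  have hHmap : H = MH.map (phiEmb ℓ) := by
    rw [hH, hMH, MonoidHom.map_closure, himg]
  -- K as a coordinate subgroup
  have hKrange : K = Subgroup.closure
      (Set.range fun i : Fin 2 => FreeGroup.of (Fin.castLE (by omega : 2 ≤ ℓ + 2) i)) := by
    rw [hK]
    congr 1
    ext g
    constructor
    · rintro (rfl | rfl)
      · exact ⟨0, rfl⟩
      · exact ⟨1, rfl⟩
    · rintro ⟨i, rfl⟩
      fin_cases i
      · left; rfl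
      · right; rfl
  -- x₁, x₂ ∈ K
  have hx1K : x₁ ∈ K := hK ▸ Subgroup.subset_closure (Set.mem_insert _ _)
  have hx2K : x₂ ∈ K := hK ▸ Subgroup.subset_closure (Set.mem_insert_iff.2 (Or.inr rfl))
  -- membership in K for images
  have hcomp : (retr Tle).comp (phiEmb ℓ) = (phiEmb ℓ).comp (retr T0) := by
    apply FreeGroup.ext_hom
    rintro ⟨n, k⟩
    by_cases hk : k = 0
    · subst hk
      rw [MonoidHom.comp_apply, MonoidHom.comp_apply,
        retr_of_mem (show ((n, (0 : Fin (ℓ + 1))) ∈ T0) from rfl), phiEmb_of_zero,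
        _root_.map_mul, _root_.map_mul, _root_.map_zpow, _root_.map_zpow,
        retr_of_mem (show ((⟨0, by omega⟩ : Fin (ℓ + 2)) ∈ Tle) by simp [hTle]),
        retr_of_mem (show ((⟨1, by omega⟩ : Fin (ℓ + 2)) ∈ Tle) by simp [hTle])]
    · rw [MonoidHom.comp_apply, MonoidHom.comp_apply,
        retr_of_not_mem (show ¬((n, k) ∈ T0) by simpa [hT0] using hk), _root_.map_one,
        phiEmb_of_pos ℓ n k hk, _root_.map_mul, _root_.map_mul, _root_.map_zpow, _root_.map_zpow,
        retr_of_mem (show ((⟨0, by omega⟩ : Fin (ℓ + 2)) ∈ Tle) by simp [hTle]),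
        retr_of_not_mem (show ¬((⟨(k : ℕ) + 1, by omega⟩ : Fin (ℓ + 2)) ∈ Tle) by
          simp only [hTle, Set.mem_setOf_eq, not_le]
          have : 1 ≤ (k : ℕ) := Nat.one_le_iff_ne_zero.2 fun h => hk (by ext; simp [h])
          omega)]
      rw [mul_one, ← zpow_add]
      norm_num
  have hKfix : ∀ x ∈ K, retr Tle x = x := by
    intro x hx
    rw [hK] at hx
    refine Subgroup.closure_induction ?_ ?_ ?_ ?_ hx
    · rintro g (rfl | rfl)
      · exact retr_of_mem (show ((⟨0, by omega⟩ : Fin (ℓ + 2)) ∈ Tle) by simp [hTle])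
      · exact retr_of_mem (show ((⟨1, by omega⟩ : Fin (ℓ + 2)) ∈ Tle) by simp [hTle])
    · exact _root_.map_one _
    · intro a b _ _ ha hb; rw [_root_.map_mul, ha, hb]
    · intro a _ ha; rw [_root_.map_inv, ha]
  have hmemK : ∀ w : FreeGroup (ℤ × Fin (ℓ + 1)),
      phiEmb ℓ w ∈ K ↔ w ∈ Subgroup.closure (FreeGroup.of '' T0) := by
    intro w
    constructor
    · intro hw
      have h1 : retr Tle (phiEmb ℓ w) = phiEmb ℓ w := hKfix _ hw
      have h2 : phiEmb ℓ (retr T0 w) = phiEmb ℓ w := by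
        rw [← MonoidHom.comp_apply, ← hcomp, MonoidHom.comp_apply, h1]
      exact (mem_closure_iff_retr T0 w).2 (phiEmb_injective ℓ h2)
    · intro hw
      have : phiEmb ℓ w ∈ Subgroup.map (phiEmb ℓ) (Subgroup.closure (FreeGroup.of '' T0)) :=
        ⟨w, hw, rfl⟩
      rw [MonoidHom.map_closure] at this
      refine (Subgroup.closure_le K).2 ?_ this
      rintro - ⟨-, ⟨⟨n, k⟩, hb, rfl⟩, rfl⟩
      have hk : k = 0 := hb
      subst hk
      rw [phiEmb_of_zero]
      exact mul_mem (mul_mem (Subgroup.zpow_mem _ hx1K _) hx2K) (Subgroup.zpow_mem _ hx1K _)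
  -- intersection computation
  have hMI_eq : MH ⊓ Subgroup.closure (FreeGroup.of '' T0) = MI := by
    have h1 : (Set.range fun x => FreeGroup.of (iotaH ℓ v x))
        = FreeGroup.of '' Set.range (iotaH ℓ v) := by
      rw [← Set.range_comp]; rfl
    have h2 : (Set.range fun i => FreeGroup.of (iotaI ℓ v i))
        = FreeGroup.of '' Set.range (iotaI ℓ v) := by
      rw [← Set.range_comp]; rfl
    have hsets : Set.range (iotaH ℓ v) ∩ T0 = Set.range (iotaI ℓ v) := by
      ext b
      constructor
      · rintro ⟨⟨(i | t), rfl⟩, hb⟩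
        · exact ⟨i, rfl⟩
        · exact absurd (congrArg Fin.val hb) (by simp [iotaH])
      · rintro ⟨i, rfl⟩
        exact ⟨⟨Sum.inl i, rfl⟩, rfl⟩
    rw [hMH, hMI, h1, h2, closure_inf_closure, hsets]
  have hIK : H ⊓ K = MI.map (phiEmb ℓ) := by
    apply le_antisymm
    · intro x hx
      obtain ⟨hxH, hxK⟩ := Subgroup.mem_inf.1 hx
      rw [hHmap] at hxH
      obtain ⟨w, hw, rfl⟩ := Subgroup.mem_map.1 hxH
      have hw0 : w ∈ Subgroup.closure (FreeGroup.of '' T0) := (hmemK w).1 hxK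
      exact Subgroup.mem_map.2 ⟨w, hMI_eq ▸ Subgroup.mem_inf.2 ⟨hw, hw0⟩, rfl⟩
    · intro x hx
      obtain ⟨w, hw, rfl⟩ := Subgroup.mem_map.1 hx
      rw [← hMI_eq] at hw
      obtain ⟨hw1, hw2⟩ := Subgroup.mem_inf.1 hw
      refine Subgroup.mem_inf.2 ⟨?_, (hmemK w).2 hw2⟩
      rw [hHmap]
      exact Subgroup.mem_map.2 ⟨w, hw1, rfl⟩
  -- join is everything
  have hJoin : H ⊔ K = ⊤ := by
    rw [hH, hK, ← Subgroup.closure_union, eq_top_iff, ← FreeGroup.closure_range_of (Fin (ℓ + 2))]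
    refine (Subgroup.closure_le _).2 ?_
    rintro - ⟨j, rfl⟩
    by_cases h0 : (j : ℕ) = 0
    · have : FreeGroup.of j = x₁ := congrArg FreeGroup.of (Fin.ext h0)
      rw [this]
      exact Subgroup.subset_closure (Or.inr (Set.mem_insert _ _))
    · by_cases h1 : (j : ℕ) = 1
      · have : FreeGroup.of j = x₂ := congrArg FreeGroup.of (Fin.ext h1)
        rw [this]
        exact Subgroup.subset_closure (Or.inr (Set.mem_insert_iff.2 (Or.inr rfl)))
      · exact Subgroup.subset_closure (Or.inl (Or.inr ⟨j, by omega, rfl⟩))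
  -- rank computations
  have gH : grank ↥H = (v - 1) + ℓ := by
    rw [grank_congr (MulEquiv.subgroupCongr hHmap),
      ← grank_congr (Subgroup.equivMapOfInjective MH (phiEmb ℓ) (phiEmb_injective ℓ)), hMH,
      grank_closure_range (iotaH_injective ℓ v)]
    simp
  have gK : grank ↥K = 2 := by
    rw [grank_congr (MulEquiv.subgroupCongr hKrange),
      grank_closure_range (Fin.castLE_injective _), Fintype.card_fin]
  have gI : grank ↥(H ⊓ K) = v - 1 := by
    rw [grank_congr (MulEquiv.subgroupCongr hIK),
      ← grank_congr (Subgroup.equivMapOfInjective MI (phiEmb ℓ) (phiEmb_injective ℓ)), hMI,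
      grank_closure_range (iotaI_injective ℓ v), Fintype.card_fin]
  have gJ : grank ↥(H ⊔ K) = ℓ + 2 := by
    rw [grank_congr (MulEquiv.subgroupCongr hJoin), grank_congr Subgroup.topEquiv,
      grank_freeGroup, Fintype.card_fin]
  have r1 : rbar ↥(H ⊓ K) = v - 2 := by rw [rbar, gI]; omega
  have r2 : rbar ↥(H ⊔ K) = ℓ + 1 := by rw [rbar, gJ]; omega
  have r3 : rbar ↥H = v + ℓ - 2 := by rw [rbar, gH]; omega
  have r4 : rbar ↥K = 1 := by rw [rbar, gK]
  rw [r1, r2, r3, r4, mul_one]
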